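/- A density operator ρ is a convex combination of unitary conjugates of a density operator σ (i.e., ρ = Σ_i p_i U_i σ U_i† with p_i ≥ 0 summing to 1 and U_i unitary) if and only if the decreasingly ordered eigenvalue vector of ρ is majorized by that of σ. -/

import Mathlib

open scoped ComplexOrder Matrix

noncomputable def sortedDesc {d : ℕ} (v : Fin d → ℝ) : Fin d → ℝ :=
  fun i => (v ∘ Tuple.sort v) (Fin.rev i)

def psum {d : ℕ} (v : Fin d → ℝ) (k : ℕ) : ℝ :=
  ∑ i : Fin d, if (i : ℕ) < k then v i else 0

/-- μ majorizes lam. -/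
def Majorizes {d : ℕ} (μ lam : Fin d → ℝ) : Prop :=
  (∀ k : ℕ, psum (sortedDesc lam) k ≤ psum (sortedDesc μ) k) ∧
    (∑ i, lam i = ∑ i, μ i)

open Finset

noncomputable def sortPerm {d : ℕ} (v : Fin d → ℝ) : Equiv.Perm (Fin d) :=
  Fin.revPerm.trans (Tuple.sort v)

lemma sortedDesc_eq_comp {d : ℕ} (v : Fin d → ℝ) :
    sortedDesc v = v ∘ (sortPerm v) := rfl

lemma antitone_sortedDesc {d : ℕ} (v : Fin d → ℝ) : Antitone (sortedDesc v) := by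
  intro i j hij
  exact Tuple.monotone_sort v (by rwa [Fin.rev_le_rev])

lemma sum_sortedDesc {d : ℕ} (v : Fin d → ℝ) :
    ∑ i, sortedDesc v i = ∑ i, v i := by
  rw [sortedDesc_eq_comp]
  exact Equiv.sum_comp (sortPerm v) v

lemma psum_of_ge {d : ℕ} (v : Fin d → ℝ) {k : ℕ} (h : d ≤ k) :
    psum v k = ∑ i, v i := by
  unfold psum
  refine Finset.sum_congr rfl fun i _ => ?_
  rw [if_pos (lt_of_lt_of_le i.isLt h)]

lemma psum_min {d : ℕ} (v : Fin d → ℝ) (k : ℕ) :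
    psum v (min k d) = psum v k := by
  rcases le_total k d with h | h
  · rw [min_eq_left h]
  · rw [min_eq_right h, psum_of_ge v h, psum_of_ge v le_rfl]

lemma sum_ind {d m : ℕ} (hm : m ≤ d) :
    ∑ i : Fin d, (if (i : ℕ) < m then (1:ℝ) else 0) = m := by
  rw [Fin.sum_univ_eq_sum_range (fun i => if i < m then (1:ℝ) else 0),
    ← Finset.sum_filter]
  have : (Finset.range d).filter (fun i => i < m) = Finset.range m := by
    ext a; simp; omega
  simp [this]

/-- key coefficient bound: if `w` is antitone and `0 ≤ c ≤ 1` with `∑ c = m`,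
then `∑ c i * w i ≤ psum w m`. -/
lemma sum_mul_le_psum {d : ℕ} {w : Fin d → ℝ} (hw : Antitone w) (c : Fin d → ℝ)
    (hc0 : ∀ i, 0 ≤ c i) (hc1 : ∀ i, c i ≤ 1) {m : ℕ} (hm : m ≤ d)
    (hsum : ∑ i, c i = m) : ∑ i, c i * w i ≤ psum w m := by
  rcases Nat.eq_zero_or_pos m with rfl | hmpos
  · have : ∀ i ∈ Finset.univ, c i = 0 :=
      (Finset.sum_eq_zero_iff_of_nonneg (fun i _ => hc0 i)).1 (by simpa using hsum)
    have h0 : ∑ i, c i * w i = 0 :=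
      Finset.sum_eq_zero fun i hi => by rw [this i hi, zero_mul]
    simp [h0, psum]
  · have hd : 0 < d := lt_of_lt_of_le hmpos hm
    set t : ℝ := w ⟨m - 1, by omega⟩ with ht
    set χ : Fin d → ℝ := fun i => if (i : ℕ) < m then (1:ℝ) else 0 with hχ
    have key : ∀ i : Fin d, c i * w i ≤ (c i - χ i) * t + χ i * w i := by
      intro i
      rcases lt_or_ge (i : ℕ) m with h | h
      · have hχi : χ i = 1 := if_pos h
        have hwt : t ≤ w i := hw (by simp [Fin.le_def]; omega)
        nlinarith [hc1 i]
      · have hχi : χ i = 0 := if_neg (by omega)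
        have hwt : w i ≤ t := hw (by simp [Fin.le_def]; omega)
        nlinarith [hc0 i]
    calc ∑ i, c i * w i ≤ ∑ i, ((c i - χ i) * t + χ i * w i) :=
          Finset.sum_le_sum fun i _ => key i
      _ = (∑ i, c i - ∑ i, χ i) * t + ∑ i, χ i * w i := by
          rw [Finset.sum_add_distrib, ← Finset.sum_mul, Finset.sum_sub_distrib]
      _ = psum w m := by
          rw [hsum, hχ, sum_ind hm]
          simp only [sub_self, zero_mul, zero_add, psum]
          exact Finset.sum_congr rfl fun i _ => by split <;> simp

lemma card_filter_lt {d k : ℕ} :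
    ((Finset.univ.filter (fun i : Fin d => (i : ℕ) < k)).card) = min k d := by
  have : (Finset.univ.filter (fun i : Fin d => (i : ℕ) < k)).map Fin.valEmbedding
      = Finset.range (min k d) := by
    ext a
    simp only [Finset.mem_map, Finset.mem_filter, Finset.mem_univ, true_and,
      Fin.valEmbedding_apply, Finset.mem_range]
    constructor
    · rintro ⟨i, hi, rfl⟩; omega
    · intro ha; exact ⟨⟨a, by omega⟩, by simp; omega, rfl⟩
  rw [← Finset.card_map Fin.valEmbedding, this, Finset.card_range]

lemma psum_sortedDesc_eq_sum_image {d : ℕ} (v : Fin d → ℝ) (k : ℕ) :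
    psum (sortedDesc v) k
      = ∑ j ∈ (Finset.univ.filter (fun i : Fin d => (i : ℕ) < k)).image (sortPerm v),
          v j := by
  rw [Finset.sum_image (by intro a _ b _ h; exact (sortPerm v).injective h)]
  rw [psum, ← Finset.sum_filter]
  exact Finset.sum_congr rfl fun i _ => congrFun (sortedDesc_eq_comp v) i

/-- doubly stochastic transform implies majorization -/
lemma majorizes_of_doublyStochastic {d : ℕ} {B : Matrix (Fin d) (Fin d) ℝ}
    (hB : B ∈ doublyStochastic ℝ (Fin d)) {x y : Fin d → ℝ}
    (hxy : ∀ a, x a = ∑ j, B a j * y j) : Majorizes y x := by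
  obtain ⟨hB0, hBrow, hBcol⟩ := mem_doublyStochastic_iff_sum.1 hB
  constructor
  · intro k
    set T := (Finset.univ.filter (fun i : Fin d => (i : ℕ) < k)).image (sortPerm x) with hT
    have hTcard : T.card = min k d := by
      rw [hT, Finset.card_image_of_injective _ (sortPerm x).injective, card_filter_lt]
    set c : Fin d → ℝ := fun l => ∑ j ∈ T, B j l with hc
    have hc0 : ∀ l, 0 ≤ c l := fun l => Finset.sum_nonneg fun j _ => hB0 j l
    have hc1 : ∀ l, c l ≤ 1 := by
      intro l
      calc c l ≤ ∑ j, B j l :=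
            Finset.sum_le_sum_of_subset_of_nonneg (Finset.subset_univ T)
              (fun j _ _ => hB0 j l)
        _ = 1 := hBcol l
    have hcsum : ∑ l, c l = ((min k d : ℕ) : ℝ) := by
      rw [hc, Finset.sum_comm, ← hTcard]
      simp [hBrow]
    have step1 : psum (sortedDesc x) k = ∑ l, c l * y l := by
      rw [psum_sortedDesc_eq_sum_image, ← hT]
      calc ∑ j ∈ T, x j = ∑ j ∈ T, ∑ l, B j l * y l :=
            Finset.sum_congr rfl fun j _ => hxy j
        _ = ∑ l, c l * y l := by
            rw [Finset.sum_comm]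
            exact Finset.sum_congr rfl fun l _ => by rw [hc, Finset.sum_mul]
    have step2 : ∑ l, c l * y l ≤ psum (sortedDesc y) (min k d) := by
      have := sum_mul_le_psum (antitone_sortedDesc y) (fun i => c (sortPerm y i))
        (fun i => hc0 _) (fun i => hc1 _) (min_le_right k d)
        (by rw [Equiv.sum_comp (sortPerm y) c, hcsum])
      calc ∑ l, c l * y l = ∑ i, c (sortPerm y i) * y (sortPerm y i) :=
            (Equiv.sum_comp (sortPerm y) (fun l => c l * y l)).symm
        _ ≤ psum (sortedDesc y) (min k d) := by
            refine le_trans (le_of_eq ?_) this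
            exact Finset.sum_congr rfl fun i _ => by
              rw [sortedDesc_eq_comp]; rfl
    rw [step1]
    calc ∑ l, c l * y l ≤ psum (sortedDesc y) (min k d) := step2
      _ = psum (sortedDesc y) k := psum_min _ k
  · calc ∑ i, x i = ∑ i, ∑ j, B i j * y j := Finset.sum_congr rfl fun i _ => hxy i
      _ = ∑ j, (∑ i, B i j) * y j := by
          rw [Finset.sum_comm]; exact Finset.sum_congr rfl fun j _ => (Finset.sum_mul _ _ _).symm
      _ = ∑ j, y j := by simp [hBcol]



section Abel
variable {d : ℕ}


/-- extension of `a` to ℕ, constant above `d-1` -/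
noncomputable def extAnt (hd : 0 < d) (a : Fin d → ℝ) : ℕ → ℝ :=
  fun k => a ⟨min k (d-1), by omega⟩

lemma extAnt_eq (hd : 0 < d) (a : Fin d → ℝ) (i : Fin d) :
    extAnt hd a (i : ℕ) = a i := by
  unfold extAnt
  congr 1
  exact Fin.ext (by simp; omega)

lemma extAnt_antitone (hd : 0 < d) {a : Fin d → ℝ} (ha : Antitone a) :
    Antitone (extAnt hd a) := by
  intro k l hkl
  exact ha (by simp [Fin.le_def]; omega)

/-- Abel summation identity -/
lemma abel_identity (hd : 0 < d) (a x : Fin d → ℝ) :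
    ∑ i, a i * x i
      = (∑ k ∈ Finset.range (d-1),
          (extAnt hd a k - extAnt hd a (k+1)) * psum x (k+1))
        + extAnt hd a (d-1) * psum x d := by
  set A := extAnt hd a with hA
  have expand : ∀ m : ℕ, ∀ cst : ℝ, cst * psum x m = ∑ i : Fin d, if (i:ℕ) < m then cst * x i else 0 := by
    intro m cst
    rw [psum, Finset.mul_sum]
    exact Finset.sum_congr rfl fun i _ => by split <;> simp
  calc ∑ i, a i * x i
      = ∑ i : Fin d, ((A i - A (d-1)) + A (d-1)) * x i := by
        refine Finset.sum_congr rfl fun i _ => ?_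
        rw [sub_add_cancel, hA, extAnt_eq]
    _ = (∑ i : Fin d, (A i - A (d-1)) * x i) + ∑ i : Fin d, A (d-1) * x i := by
        rw [← Finset.sum_add_distrib]
        exact Finset.sum_congr rfl fun i _ => by ring
    _ = (∑ k ∈ Finset.range (d-1), (A k - A (k+1)) * psum x (k+1))
        + A (d-1) * psum x d := by
        congr 1
        · -- swap sums
          have : ∀ k, (A k - A (k+1)) * psum x (k+1)
              = ∑ i : Fin d, if (i:ℕ) < k + 1 then (A k - A (k+1)) * x i else 0 :=
            fun k => expand (k+1) _
          rw [Finset.sum_congr rfl fun k _ => this k, Finset.sum_comm]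
          refine Finset.sum_congr rfl fun i _ => ?_
          have h1 : ∑ k ∈ Finset.range (d-1), (if (i:ℕ) < k + 1 then (A k - A (k+1)) * x i else 0)
              = ∑ k ∈ Finset.Ico (i:ℕ) (d-1), (A k - A (k+1)) * x i := by
            rw [← Finset.sum_filter]
            congr 1
            ext k
            simp [Finset.mem_filter, Finset.mem_Ico, Finset.mem_range]
            omega
          rw [h1, ← Finset.sum_mul]
          have hi : (i : ℕ) ≤ d - 1 := by omega
          rw [Finset.sum_Ico_eq_sub _ hi, Finset.sum_range_sub' A, Finset.sum_range_sub' A]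
          ring
        · rw [expand d (A (d-1))]
          exact Finset.sum_congr rfl fun i _ => (if_pos i.isLt).symm

lemma sum_mul_le_of_majorizes (hd : 0 < d) {a x y : Fin d → ℝ} (ha : Antitone a)
    (h1 : ∀ k, psum x k ≤ psum y k) (h2 : psum x d = psum y d) :
    ∑ i, a i * x i ≤ ∑ i, a i * y i := by
  rw [abel_identity hd a x, abel_identity hd a y, h2]
  refine add_le_add (Finset.sum_le_sum fun k _ => ?_) le_rfl
  have hnn : 0 ≤ extAnt hd a k - extAnt hd a (k+1) :=
    sub_nonneg.2 (extAnt_antitone hd ha (Nat.le_succ k))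
  exact mul_le_mul_of_nonneg_left (h1 (k+1)) hnn

end Abel

section Sep
open Finset

lemma monovary_sorted {d : ℕ} (c x : Fin d → ℝ) :
    Monovary (sortedDesc c) (sortedDesc x) := by
  intro i j hij
  rcases le_total i j with h | h
  · exact absurd (antitone_sortedDesc x h) (not_le.2 hij)
  · exact antitone_sortedDesc c h

lemma exists_convex_perm {d : ℕ} {x y : Fin d → ℝ} (hM : Majorizes y x) :
    ∃ w : Equiv.Perm (Fin d) → ℝ, (∀ π, 0 ≤ w π) ∧ (∑ π, w π = 1) ∧
      ∀ a, x a = ∑ π, w π * y (π a) := by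
  classical
  rcases Nat.eq_zero_or_pos d with rfl | hd
  · exact ⟨fun π => if π = 1 then 1 else 0, fun π => by dsimp only; split <;> norm_num,
      by simp, fun a => a.elim0⟩
  set g : Equiv.Perm (Fin d) → (Fin d → ℝ) := fun π => y ∘ π with hg
  have hxK : x ∈ convexHull ℝ (Set.range g) := by
    by_contra hxK
    obtain ⟨f, u, hfu, hux⟩ := geometric_hahn_banach_closed_point
      (convex_convexHull ℝ _)
      ((Set.finite_range g).isCompact_convexHull ℝ).isClosed hxK
    set c : Fin d → ℝ := fun j => f (fun i => if j = i then 1 else 0) with hc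
    have hf : ∀ v : Fin d → ℝ, f v = ∑ j, v j * c j := by
      intro v
      conv_lhs => rw [pi_eq_sum_univ v]
      rw [map_sum]
      exact Finset.sum_congr rfl fun j _ => by rw [map_smul]; simp [hc, smul_eq_mul]
    set ec := sortPerm c with hec
    set ex := sortPerm x with hex
    set ey := sortPerm y with hey
    have step1 : f x ≤ ∑ i, sortedDesc c i * sortedDesc x i := by
      rw [hf]
      have e1 : ∑ j, x j * c j
          = ∑ i, sortedDesc c i * sortedDesc x ((ec.trans ex.symm) i) := by
        rw [← Equiv.sum_comp ec (fun j => x j * c j)]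
        refine Finset.sum_congr rfl fun i _ => ?_
        rw [sortedDesc_eq_comp, sortedDesc_eq_comp]
        simp [hex, hec, mul_comm]
      rw [e1]
      exact Monovary.sum_mul_comp_perm_le_sum_mul (monovary_sorted c x)
    have step2 : ∑ i, sortedDesc c i * sortedDesc x i
        ≤ ∑ i, sortedDesc c i * sortedDesc y i := by
      refine sum_mul_le_of_majorizes hd (antitone_sortedDesc c) hM.1 ?_
      rw [psum_of_ge _ le_rfl, psum_of_ge _ le_rfl, sum_sortedDesc, sum_sortedDesc]
      exact hM.2
    have step3 : ∑ i, sortedDesc c i * sortedDesc y i = f (g (ec.symm.trans ey)) := by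
      rw [hf]
      rw [← Equiv.sum_comp ec (fun j => (g (ec.symm.trans ey)) j * c j)]
      refine Finset.sum_congr rfl fun i _ => ?_
      rw [sortedDesc_eq_comp, sortedDesc_eq_comp]
      simp [hg, hey, hec, mul_comm]
    have hmem : f (g (ec.symm.trans ey)) < u :=
      hfu _ (subset_convexHull ℝ _ ⟨ec.symm.trans ey, rfl⟩)
    linarith
  have hsub : convexHull ℝ (Set.range g)
      ⊆ {z : Fin d → ℝ | ∃ w : Equiv.Perm (Fin d) → ℝ,
          (∀ π, 0 ≤ w π) ∧ (∑ π, w π = 1) ∧ ∀ a, z a = ∑ π, w π * y (π a)} := by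
    apply convexHull_min
    · rintro _ ⟨π₀, rfl⟩
      refine ⟨fun π => if π = π₀ then 1 else 0, fun π => by dsimp only; split <;> norm_num,
        by simp, fun a => ?_⟩
      simp only [ite_mul, one_mul, zero_mul]
      rw [Finset.sum_ite_eq' Finset.univ π₀ (fun π => y (π a))]
      simp [hg]
    · intro z1 hz1 z2 hz2 θ1 θ2 hθ1 hθ2 hθ
      obtain ⟨w1, hw10, hw11, hw12⟩ := hz1
      obtain ⟨w2, hw20, hw21, hw22⟩ := hz2
      refine ⟨fun π => θ1 * w1 π + θ2 * w2 π,
        fun π => add_nonneg (mul_nonneg hθ1 (hw10 π)) (mul_nonneg hθ2 (hw20 π)),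
        ?_, fun a => ?_⟩
      · rw [Finset.sum_add_distrib, ← Finset.mul_sum, ← Finset.mul_sum, hw11, hw21]; simpa using hθ
      · simp only [Pi.add_apply, Pi.smul_apply, smul_eq_mul]
        rw [hw12 a, hw22 a, Finset.mul_sum, Finset.mul_sum, ← Finset.sum_add_distrib]
        exact Finset.sum_congr rfl fun π _ => by ring
  exact hsub hxK

end Sep

open Matrix

section PermM
variable {d : ℕ}

lemma permMatrix_apply' (π : Equiv.Perm (Fin d)) (i j : Fin d) :
    (π.permMatrix ℂ) i j = if π i = j then 1 else 0 := by
  simp [Equiv.Perm.permMatrix, PEquiv.toMatrix_apply, Equiv.toPEquiv_apply, eq_comm]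

lemma perm_conj_diagonal (π : Equiv.Perm (Fin d)) (v : Fin d → ℂ) :
    (π.permMatrix ℂ) * diagonal v * star (π.permMatrix ℂ)
      = diagonal (fun i => v (π i)) := by
  ext i j
  rw [Matrix.mul_apply, Finset.sum_eq_single (π i)]
  · rw [Matrix.mul_diagonal, permMatrix_apply', Matrix.star_apply, permMatrix_apply']
    by_cases h : i = j
    · subst h; simp [Matrix.diagonal_apply]
    · have : ¬ π j = π i := fun hh => h (π.injective hh).symm
      simp [Matrix.diagonal_apply, h, this]
  · intro k _ hk
    rw [Matrix.mul_diagonal, permMatrix_apply', if_neg (fun hh => hk hh.symm), zero_mul, zero_mul]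
  · simp

lemma permMatrix_mem_unitaryGroup (π : Equiv.Perm (Fin d)) :
    π.permMatrix ℂ ∈ Matrix.unitaryGroup (Fin d) ℂ := by
  rw [Matrix.mem_unitaryGroup_iff]
  ext i j
  rw [Matrix.mul_apply, Finset.sum_eq_single (π i)]
  · rw [permMatrix_apply', if_pos rfl, Matrix.star_apply, permMatrix_apply', Matrix.one_apply]
    by_cases h : i = j
    · subst h; simp
    · have : ¬ π j = π i := fun hh => h (π.injective hh).symm
      simp [h, this]
  · intro k _ hk
    rw [permMatrix_apply', if_neg (fun hh => hk hh.symm), zero_mul]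
  · simp

end PermM

section Main
open Matrix


open Matrix

/-- ρ is a convex combination of unitary conjugates of σ iff the
eigenvalue vector of ρ is majorized by that of σ (Uhlmann). -/
theorem convex_combination_unitary_conjugates_iff_majorized
    {d : ℕ} (ρ σ : Matrix (Fin d) (Fin d) ℂ)
    (hρ : ρ.PosSemidef) (hρt : ρ.trace = 1)
    (hσ : σ.PosSemidef) (hσt : σ.trace = 1) :
    (∃ (n : ℕ) (p : Fin n → ℝ) (U : Fin n → Matrix (Fin d) (Fin d) ℂ),
        (∀ i, 0 ≤ p i) ∧ (∑ i, p i = 1) ∧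
        (∀ i, U i ∈ Matrix.unitaryGroup (Fin d) ℂ) ∧
        ρ = ∑ i, (p i : ℂ) • (U i * σ * (U i)ᴴ)) ↔
      Majorizes hσ.1.eigenvalues hρ.1.eigenvalues := by
  classical
  set lρ := hρ.1.eigenvalues with hlρdef
  set lσ := hσ.1.eigenvalues with hlσdef
  set V : Matrix (Fin d) (Fin d) ℂ := (hρ.1.eigenvectorUnitary : Matrix (Fin d) (Fin d) ℂ) with hVdef
  set W : Matrix (Fin d) (Fin d) ℂ := (hσ.1.eigenvectorUnitary : Matrix (Fin d) (Fin d) ℂ) with hWdef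
  have hVmem : V ∈ Matrix.unitaryGroup (Fin d) ℂ := hρ.1.eigenvectorUnitary.2
  have hWmem : W ∈ Matrix.unitaryGroup (Fin d) ℂ := hσ.1.eigenvectorUnitary.2
  have hV1 : star V * V = 1 := Matrix.mem_unitaryGroup_iff'.mp hVmem
  have hW1 : star W * W = 1 := Matrix.mem_unitaryGroup_iff'.mp hWmem
  have hspecρ : ρ = V * diagonal (RCLike.ofReal ∘ lρ) * star V := hρ.1.spectral_theorem
  have hspecσ : σ = W * diagonal (RCLike.ofReal ∘ lσ) * star W := hσ.1.spectral_theorem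
  constructor
  · rintro ⟨n, p, U, hp0, hp1, hUmem, hρeq⟩
    set M : Fin n → Matrix (Fin d) (Fin d) ℂ := fun i => star V * U i * W with hMdef
    have hMmem : ∀ i, M i ∈ Matrix.unitaryGroup (Fin d) ℂ := fun i =>
      mul_mem (mul_mem (Unitary.star_mem hVmem) (hUmem i)) hWmem
    have hMrow : ∀ i a, ∑ j, Complex.normSq (M i a j) = 1 := by
      intro i a
      have h := Matrix.ext_iff.mpr (Matrix.mem_unitaryGroup_iff.mp (hMmem i)) a a
      rw [Matrix.mul_apply, Matrix.one_apply_eq] at h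
      have h2 : ∑ j, (Complex.normSq (M i a j) : ℂ) = 1 := by
        rw [← h]
        refine Finset.sum_congr rfl fun j _ => ?_
        rw [Matrix.star_apply, Complex.star_def, Complex.mul_conj]
      exact_mod_cast h2
    have hMcol : ∀ i j, ∑ a, Complex.normSq (M i a j) = 1 := by
      intro i j
      have h := Matrix.ext_iff.mpr (Matrix.mem_unitaryGroup_iff'.mp (hMmem i)) j j
      rw [Matrix.mul_apply, Matrix.one_apply_eq] at h
      have h2 : ∑ a, (Complex.normSq (M i a j) : ℂ) = 1 := by
        rw [← h]
        refine Finset.sum_congr rfl fun a _ => ?_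
        rw [Matrix.star_apply, Complex.star_def, mul_comm, Complex.mul_conj]
      exact_mod_cast h2
    set B : Matrix (Fin d) (Fin d) ℝ := fun a j => ∑ i, p i * Complex.normSq (M i a j)
      with hBdef
    have hBds : B ∈ doublyStochastic ℝ (Fin d) := by
      rw [mem_doublyStochastic_iff_sum]
      refine ⟨fun a j => Finset.sum_nonneg fun i _ => mul_nonneg (hp0 i) (Complex.normSq_nonneg _),
        fun a => ?_, fun j => ?_⟩
      · rw [Finset.sum_comm]
        calc ∑ i, ∑ j, p i * Complex.normSq (M i a j)
            = ∑ i, p i * ∑ j, Complex.normSq (M i a j) := by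
              exact Finset.sum_congr rfl fun i _ => (Finset.mul_sum _ _ _).symm
          _ = 1 := by simp [hMrow, hp1]
      · rw [Finset.sum_comm]
        calc ∑ i, ∑ a, p i * Complex.normSq (M i a j)
            = ∑ i, p i * ∑ a, Complex.normSq (M i a j) := by
              exact Finset.sum_congr rfl fun i _ => (Finset.mul_sum _ _ _).symm
          _ = 1 := by simp [hMcol, hp1]
    have e1 : star V * ρ * V = diagonal (RCLike.ofReal ∘ lρ) := by
      conv_lhs => rw [hspecρ]
      calc star V * (V * diagonal (RCLike.ofReal ∘ lρ) * star V) * V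
          = (star V * V) * diagonal (RCLike.ofReal ∘ lρ) * (star V * V) := by
            simp only [Matrix.mul_assoc]
        _ = diagonal (RCLike.ofReal ∘ lρ) := by rw [hV1, Matrix.one_mul, Matrix.mul_one]
    have e2 : star V * ρ * V
        = ∑ i, (p i : ℂ) • (M i * diagonal (RCLike.ofReal ∘ lσ) * star (M i)) := by
      conv_lhs => rw [hρeq]
      simp only [Matrix.mul_sum, Matrix.sum_mul, Matrix.mul_smul, Matrix.smul_mul]
      refine Finset.sum_congr rfl fun i _ => ?_
      congr 1
      rw [hspecσ, ← Matrix.star_eq_conjTranspose, hMdef]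
      simp only [Matrix.star_mul, star_star]
      simp only [Matrix.mul_assoc]
    have hentry : ∀ (i : Fin n) (a : Fin d),
        ((M i * diagonal (RCLike.ofReal ∘ lσ) * star (M i)) : Matrix (Fin d) (Fin d) ℂ) a a
          = ∑ j, (Complex.normSq (M i a j) : ℂ) * (lσ j : ℂ) := by
      intro i a
      rw [Matrix.mul_apply]
      refine Finset.sum_congr rfl fun j _ => ?_
      rw [Matrix.mul_diagonal, Matrix.star_apply, Complex.star_def, Function.comp_apply]
      have : ∀ z c : ℂ, z * c * (starRingEnd ℂ) z = (Complex.normSq z : ℂ) * c := by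
        intro z c
        rw [mul_comm z c, mul_assoc, Complex.mul_conj]
        ring
      exact this _ _
    have hBx : ∀ a, lρ a = ∑ j, B a j * lσ j := by
      intro a
      apply Complex.ofReal_injective
      have h := Matrix.ext_iff.mpr (e1.symm.trans e2) a a
      rw [Matrix.diagonal_apply_eq, Matrix.sum_apply] at h
      simp only [Matrix.smul_apply, smul_eq_mul] at h
      have h' : ((lρ a : ℝ) : ℂ)
          = ∑ i, (p i : ℂ) * ∑ j, (Complex.normSq (M i a j) : ℂ) * (lσ j : ℂ) := by
        refine h.trans (Finset.sum_congr rfl fun i _ => ?_)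
        rw [hentry i a]
      have h3 : ((∑ j, B a j * lσ j : ℝ) : ℂ)
          = ∑ i, (p i : ℂ) * ∑ j, (Complex.normSq (M i a j) : ℂ) * (lσ j : ℂ) := by
        simp only [hBdef]
        push_cast
        simp only [Finset.sum_mul, Finset.mul_sum]
        rw [Finset.sum_comm]
        exact Finset.sum_congr rfl fun i _ => Finset.sum_congr rfl fun j _ => by ring
      exact h'.trans h3.symm
    exact majorizes_of_doublyStochastic hBds hBx
  · intro hmaj
    obtain ⟨w, hw0, hw1, hwx⟩ := exists_convex_perm hmaj
    set n := Fintype.card (Equiv.Perm (Fin d)) with hn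
    set e : Fin n ≃ Equiv.Perm (Fin d) := (Fintype.equivFin (Equiv.Perm (Fin d))).symm with he
    refine ⟨n, fun i => w (e i), fun i => V * ((e i).permMatrix ℂ) * star W,
      fun i => hw0 _, by rw [← hw1]; exact Equiv.sum_comp e w,
      fun i => mul_mem (mul_mem hVmem (permMatrix_mem_unitaryGroup (e i)))
        (Unitary.star_mem hWmem), ?_⟩
    have hdiag2 : diagonal (RCLike.ofReal ∘ lρ)
        = ∑ i : Fin n, (w (e i) : ℂ) • diagonal (fun a => ((lσ ((e i) a) : ℝ) : ℂ)) := by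
      ext a b
      rw [Matrix.sum_apply]
      simp only [Matrix.smul_apply, Matrix.diagonal_apply, smul_eq_mul, Function.comp_apply]
      by_cases hab : a = b
      · subst hab
        simp only [if_pos rfl]
        rw [show (RCLike.ofReal (lρ a) : ℂ) = ((lρ a : ℝ) : ℂ) from rfl, hwx a,
          ← Equiv.sum_comp e (fun π => w π * lσ (π a))]
        push_cast
        rfl
      · simp [hab]
    have hUi : ∀ i : Fin n,
        (V * ((e i).permMatrix ℂ) * star W) * σ * star (V * ((e i).permMatrix ℂ) * star W)
          = V * diagonal (fun a => ((lσ ((e i) a) : ℝ) : ℂ)) * star V := by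
      intro i
      have cancelW : ∀ X : Matrix (Fin d) (Fin d) ℂ, star W * (W * X) = X := fun X => by
        rw [← Matrix.mul_assoc, hW1, Matrix.one_mul]
      have hP := perm_conj_diagonal (e i) (RCLike.ofReal ∘ lσ)
      conv_lhs => rw [hspecσ]
      simp only [Matrix.star_mul, star_star]
      simp only [Matrix.mul_assoc]
      rw [cancelW, cancelW]
      congr 1
      rw [show (diagonal (fun a => ((lσ ((e i) a) : ℝ) : ℂ)))
          = diagonal (fun a => (RCLike.ofReal ∘ lσ) ((e i) a)) from rfl, ← hP]
      simp only [Matrix.mul_assoc]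
    simp only [← Matrix.star_eq_conjTranspose]
    rw [Finset.sum_congr rfl (fun i (_ : i ∈ Finset.univ) => by rw [hUi i])]
    calc ρ = V * diagonal (RCLike.ofReal ∘ lρ) * star V := hspecρ
      _ = V * (∑ i : Fin n, (w (e i) : ℂ) • diagonal (fun a => ((lσ ((e i) a) : ℝ) : ℂ)))
            * star V := by rw [← hdiag2]
      _ = ∑ i : Fin n, (w (e i) : ℂ) • (V * diagonal (fun a => ((lσ ((e i) a) : ℝ) : ℂ))
            * star V) := by
          simp only [Matrix.mul_sum, Matrix.sum_mul, Matrix.mul_smul, Matrix.smul_mul]
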